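/- (Insert preserves the invariants.) Let L be a linear order, ℓ ≥ 1 a natural number, S a finite subset of L, δ ∈ WithTop L, and B = {s ∈ S : (s : WithTop L) ≤ δ}. Assume the invariants: B = {s ∈ S : s ≤ δ}, |B| ≤ ℓ, B = ∅ ↔ S = ∅, and S = ∅ → δ = ⊤. Let p ∈ L be a new element and set S' = S ∪ {p}. Define (B', δ') by: if ¬(p ≤ δ) then (B', δ') = (B, δ); otherwise B' = Smallest(B ∪ {p}, ℓ) and δ' = max B' if |B'| = ℓ, δ' = δ if |B'| < ℓ. Then the invariants hold for S': B' = {s ∈ S' : (s : WithTop L) ≤ δ'}, |B'| ≤ ℓ, and B' is nonempty (as S' is nonempty). -/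

import Mathlib

/-- `Smallest S r` is the set of the `r` smallest elements of the finite set `S`
(in a linear order); if `|S| ≤ r` it is `S` itself. -/
def Smallest {L : Type*} [LinearOrder L] (S : Finset L) (r : ℕ) : Finset L :=
  ((S.sort (· ≤ ·)).take r).toFinset

theorem sorted_take_downclosed {L : Type*} [LinearOrder L] (l : List L)
    (hl : l.Pairwise (· < ·)) (r : ℕ)
    (x y : L) (hx : x ∈ l) (hxy : x ≤ y) (hy : y ∈ l.take r) : x ∈ l.take r := by
  obtain ⟨i, hi, rfl⟩ := List.mem_iff_getElem.1 hx
  obtain ⟨j, hj, hjy⟩ := List.mem_iff_getElem.1 hy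
  have hj' : j < min r l.length := by simpa using hj
  rw [List.getElem_take] at hjy
  have hij : i ≤ j := by
    by_contra h
    have := List.pairwise_iff_getElem.1 hl j i (lt_of_lt_of_le hj' (min_le_right _ _)) hi
      (by omega)
    rw [hjy] at this
    exact absurd hxy (not_le.2 this)
  refine List.mem_iff_getElem.2 ⟨i, by simp; omega, ?_⟩
  rw [List.getElem_take]

theorem smallest_subset {L : Type*} [LinearOrder L] (S : Finset L) (r : ℕ) :
    Smallest S r ⊆ S := by
  intro x hx
  have := List.mem_toFinset.1 hx
  exact (Finset.mem_sort (· ≤ ·)).1 (List.mem_of_mem_take this)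

theorem card_smallest {L : Type*} [LinearOrder L] (S : Finset L) (r : ℕ) :
    (Smallest S r).card = min r S.card := by
  unfold Smallest
  rw [List.toFinset_card_of_nodup ((S.sort_nodup _).sublist (List.take_sublist _ _))]
  simp [List.length_take]

theorem smallest_eq_self {L : Type*} [LinearOrder L] (S : Finset L) (r : ℕ)
    (h : S.card ≤ r) : Smallest S r = S := by
  unfold Smallest
  rw [List.take_of_length_le (by simpa using h), Finset.sort_toFinset]

theorem mem_smallest_of_le {L : Type*} [LinearOrder L] (S : Finset L) (r : ℕ)
    (x y : L) (hx : x ∈ S) (hxy : x ≤ y) (hy : y ∈ Smallest S r) :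
    x ∈ Smallest S r := by
  refine List.mem_toFinset.2 (sorted_take_downclosed _ (S.sortedLT_sort.pairwise) r x y
    ((Finset.mem_sort (· ≤ ·)).2 hx) hxy (List.mem_toFinset.1 hy))

/-- **The `insert` operation preserves the buffer invariants.**  Let `ℓ ≥ 1`,
`S` a finite set in a linear order `L`, `δ ∈ WithTop L`, and
`B = {s ∈ S : s ≤ δ}` with `|B| ≤ ℓ`, `B = ∅ ↔ S = ∅`, and `S = ∅ → δ = ⊤`.
Insert a new element `p`, i.e. `S' = S ∪ {p}`, and define `(B', δ')` by:
if `¬(p ≤ δ)` then `(B', δ') = (B, δ)`; otherwise `B' = Smallest(B ∪ {p}, ℓ)` and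
`δ' = max B'` if `|B'| = ℓ`, `δ' = δ` if `|B'| < ℓ`.  Then the invariants hold for
`S'`: `B' = {s ∈ S' : s ≤ δ'}`, `|B'| ≤ ℓ`, and `B'` is nonempty. -/
theorem insert_preserves_invariants {L : Type*} [LinearOrder L]
    (ℓ : ℕ) (hℓ : 1 ≤ ℓ) (S : Finset L) (δ : WithTop L) (B : Finset L)
    (hinv1 : B = S.filter fun s : L => (s : WithTop L) ≤ δ)
    (hinv2 : B.card ≤ ℓ)
    (hinv3 : B = ∅ ↔ S = ∅)
    (hinv4 : S = ∅ → δ = ⊤)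
    (p : L) (B' : Finset L) (δ' : WithTop L)
    (hskip : ¬ ((p : WithTop L) ≤ δ) → B' = B ∧ δ' = δ)
    (htake : (p : WithTop L) ≤ δ →
      B' = Smallest (insert p B) ℓ ∧
        (B'.card = ℓ → ∀ hne : B'.Nonempty, δ' = (B'.max' hne : WithTop L)) ∧
        (B'.card < ℓ → δ' = δ)) :
    B' = (insert p S).filter (fun s : L => (s : WithTop L) ≤ δ') ∧
      B'.card ≤ ℓ ∧ B'.Nonempty := by
  have hBS : B ⊆ S := hinv1 ▸ Finset.filter_subset _ _
  by_cases hp : (p : WithTop L) ≤ δ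
  · obtain ⟨hB', hfull, hlt⟩ := htake hp
    have hTle : ∀ x ∈ insert p B, (x : WithTop L) ≤ δ := by
      intro x hx
      rcases Finset.mem_insert.1 hx with rfl | hx
      · exact hp
      · rw [hinv1] at hx
        exact (Finset.mem_filter.1 hx).2
    have hcard : B'.card = min ℓ (insert p B).card := hB' ▸ card_smallest _ _
    have hcardle : B'.card ≤ ℓ := hcard ▸ min_le_left _ _
    have hne : B'.Nonempty := by
      rw [← Finset.card_pos, hcard]
      have : 0 < (insert p B).card := Finset.card_pos.2 ⟨p, Finset.mem_insert_self _ _⟩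
      omega
    refine ⟨?_, hcardle, hne⟩
    rcases lt_or_eq_of_le hcardle with hlt' | heq
    · -- B' = insert p B, δ' = δ
      have hδ' : δ' = δ := hlt hlt'
      have hTcard : (insert p B).card ≤ ℓ := by omega
      have : B' = insert p B := hB' ▸ smallest_eq_self _ _ hTcard
      rw [this, hδ', Finset.filter_insert, if_pos hp, ← hinv1]
    · -- full buffer
      have hδ' : δ' = (B'.max' hne : WithTop L) := hfull heq hne
      have hsub : B' ⊆ insert p B := hB' ▸ smallest_subset _ _
      have hmaxδ : ((B'.max' hne : L) : WithTop L) ≤ δ := hTle _ (hsub (B'.max'_mem hne))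
      ext x
      rw [Finset.mem_filter, Finset.mem_insert, hδ']
      constructor
      · intro hx
        refine ⟨?_, WithTop.coe_le_coe.2 (B'.le_max' x hx)⟩
        rcases Finset.mem_insert.1 (hsub hx) with rfl | hx'
        · exact Or.inl rfl
        · exact Or.inr (hBS hx')
      · rintro ⟨hx, hle⟩
        have hle' : x ≤ B'.max' hne := WithTop.coe_le_coe.1 hle
        have hxT : x ∈ insert p B := by
          rcases hx with rfl | hx
          · exact Finset.mem_insert_self _ _
          · refine Finset.mem_insert_of_mem ?_
            rw [hinv1, Finset.mem_filter]
            exact ⟨hx, le_trans hle hmaxδ⟩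
        rw [hB']
        exact mem_smallest_of_le _ _ x _ hxT hle' (hB' ▸ B'.max'_mem hne)
  · obtain ⟨rfl, rfl⟩ := hskip hp
    have hδ : δ' ≠ ⊤ := fun h => hp (h ▸ le_top)
    have hS : S ≠ ∅ := fun h => hδ (hinv4 h)
    have hBne : B'.Nonempty := Finset.nonempty_iff_ne_empty.2 fun h => hS (hinv3.1 h)
    refine ⟨?_, hinv2, hBne⟩
    rw [Finset.filter_insert, if_neg hp, ← hinv1]
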